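/- The maximal advantage over tests, η(P,Q) = sup_φ (E_Q[φ] - E_P[φ]) over measurable tests φ: O → [0,1], equals the total variation distance TV(P, Q), and equals 1 - 2α* where α* is the unique fixed point of the symmetric trade-off function, i.e., α* satisfies T(P,Q)(α*) = α* when T(P,Q) is symmetric (T(P,Q) = T(Q,P)). -/

import Mathlib

open MeasureTheory

/-- Trade-off function `T(P,Q)(α) = inf {1 - E_Q[φ] : E_P[φ] ≤ α}` over measurable
tests `φ : O → [0,1]`. -/
noncomputable def tradeoff {O : Type*} [MeasurableSpace O] (P Q : Measure O) (α : ℝ) : ℝ :=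
  sInf {β | ∃ φ : O → ℝ, Measurable φ ∧ (∀ o, 0 ≤ φ o) ∧ (∀ o, φ o ≤ 1) ∧
    (∫ o, φ o ∂P) ≤ α ∧ β = 1 - ∫ o, φ o ∂Q}

/-- Maximal advantage over measurable tests: `η(P,Q) = sup_φ (E_Q[φ] - E_P[φ])`. -/
noncomputable def advantage {O : Type*} [MeasurableSpace O] (P Q : Measure O) : ℝ :=
  sSup {x | ∃ φ : O → ℝ, Measurable φ ∧ (∀ o, 0 ≤ φ o) ∧ (∀ o, φ o ≤ 1) ∧
    x = (∫ o, φ o ∂Q) - ∫ o, φ o ∂P}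

/-- Total variation distance `TV(P,Q) = sup_E (Q(E) - P(E))`. -/
noncomputable def tvDist {O : Type*} [MeasurableSpace O] (P Q : Measure O) : ℝ :=
  sSup {x | ∃ E : Set O, MeasurableSet E ∧ x = (Q E).toReal - (P E).toReal}

section Aux

variable {O : Type*} [MeasurableSpace O]

/-- The set over which the trade-off infimum is taken. -/
def tSet (P Q : Measure O) (α : ℝ) : Set ℝ :=
  {β | ∃ φ : O → ℝ, Measurable φ ∧ (∀ o, 0 ≤ φ o) ∧ (∀ o, φ o ≤ 1) ∧
    (∫ o, φ o ∂P) ≤ α ∧ β = 1 - ∫ o, φ o ∂Q}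

lemma tradeoff_eq (P Q : Measure O) (α : ℝ) : tradeoff P Q α = sInf (tSet P Q α) := rfl

lemma test_integrable (μ : Measure O) [IsFiniteMeasure μ] {φ : O → ℝ}
    (hm : Measurable φ) (h0 : ∀ o, 0 ≤ φ o) (h1 : ∀ o, φ o ≤ 1) : Integrable φ μ :=
  (integrable_const (1 : ℝ)).mono' hm.aestronglyMeasurable
    (Filter.Eventually.of_forall fun o => by
      rw [Real.norm_eq_abs, abs_of_nonneg (h0 o)]; exact h1 o)

lemma test_integral_le_one (μ : Measure O) [IsProbabilityMeasure μ] {φ : O → ℝ}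
    (hm : Measurable φ) (h0 : ∀ o, 0 ≤ φ o) (h1 : ∀ o, φ o ≤ 1) :
    ∫ o, φ o ∂μ ≤ 1 := by
  calc ∫ o, φ o ∂μ ≤ ∫ _o, (1 : ℝ) ∂μ :=
        integral_mono (test_integrable μ hm h0 h1) (integrable_const 1) h1
    _ = 1 := by simp

lemma tSet_nonempty (P Q : Measure O) {α : ℝ} (hα : 0 ≤ α) : (tSet P Q α).Nonempty := by
  refine ⟨1 - ∫ o, (0 : ℝ) ∂Q, fun _ => 0, measurable_const, fun _ => le_refl 0,
    fun _ => zero_le_one, ?_, rfl⟩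
  simpa using hα

lemma tSet_bddBelow (P Q : Measure O) [IsProbabilityMeasure Q] (α : ℝ) :
    BddBelow (tSet P Q α) := by
  refine ⟨0, fun β hβ => ?_⟩
  obtain ⟨φ, hm, h0, h1, _, rfl⟩ := hβ
  have := test_integral_le_one Q hm h0 h1
  linarith

lemma tradeoff_nonneg (P Q : Measure O) [IsProbabilityMeasure Q] {α : ℝ} (hα : 0 ≤ α) :
    0 ≤ tradeoff P Q α := by
  rw [tradeoff_eq]
  refine le_csInf (tSet_nonempty P Q hα) (fun β hβ => ?_)
  obtain ⟨φ, hm, h0, h1, _, rfl⟩ := hβ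
  have := test_integral_le_one Q hm h0 h1
  linarith

lemma tradeoff_mono (P Q : Measure O) [IsProbabilityMeasure Q] {α α' : ℝ}
    (hα : 0 ≤ α) (h : α ≤ α') : tradeoff P Q α' ≤ tradeoff P Q α := by
  rw [tradeoff_eq, tradeoff_eq]
  refine csInf_le_csInf (tSet_bddBelow P Q α') (tSet_nonempty P Q hα) ?_
  rintro β ⟨φ, hm, h0, h1, hint, rfl⟩
  exact ⟨φ, hm, h0, h1, hint.trans h, rfl⟩

/-- Convexity of the trade-off function (the instance we need). -/
lemma tradeoff_convex (P Q : Measure O) [IsProbabilityMeasure P] [IsProbabilityMeasure Q]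
    {a b t : ℝ} (ha : 0 ≤ a) (hb : 0 ≤ b) (ht0 : 0 ≤ t) (ht1 : t ≤ 1) :
    tradeoff P Q (t * a + (1 - t) * b) ≤ t * tradeoff P Q a + (1 - t) * tradeoff P Q b := by
  by_contra hcon
  push_neg at hcon
  set δ : ℝ := (tradeoff P Q (t * a + (1 - t) * b)
      - (t * tradeoff P Q a + (1 - t) * tradeoff P Q b)) / 2 with hδ
  have hδpos : 0 < δ := by rw [hδ]; linarith
  -- near-optimal tests for a and b
  have hwa : ∃ β ∈ tSet P Q a, β < tradeoff P Q a + δ :=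
    exists_lt_of_csInf_lt (tSet_nonempty P Q ha) (by rw [← tradeoff_eq]; linarith)
  have hwb : ∃ β ∈ tSet P Q b, β < tradeoff P Q b + δ :=
    exists_lt_of_csInf_lt (tSet_nonempty P Q hb) (by rw [← tradeoff_eq]; linarith)
  obtain ⟨β1, ⟨φ1, hm1, h01, h11, hP1, rfl⟩, hβ1⟩ := hwa
  obtain ⟨β2, ⟨φ2, hm2, h02, h12, hP2, rfl⟩, hβ2⟩ := hwb
  set φ : O → ℝ := fun o => t * φ1 o + (1 - t) * φ2 o with hφ
  have hmφ : Measurable φ := (hm1.const_mul t).add (hm2.const_mul (1 - t))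
  have h0φ : ∀ o, 0 ≤ φ o := fun o =>
    add_nonneg (mul_nonneg ht0 (h01 o)) (mul_nonneg (by linarith) (h02 o))
  have h1φ : ∀ o, φ o ≤ 1 := fun o => by
    have := mul_le_mul_of_nonneg_left (h11 o) ht0
    have := mul_le_mul_of_nonneg_left (h12 o) (by linarith : (0:ℝ) ≤ 1 - t)
    simp only [hφ]; linarith
  have hintP : ∫ o, φ o ∂P = t * ∫ o, φ1 o ∂P + (1 - t) * ∫ o, φ2 o ∂P := by
    rw [hφ]
    rw [integral_add ((test_integrable P hm1 h01 h11).const_mul t)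
        ((test_integrable P hm2 h02 h12).const_mul (1 - t)),
      integral_const_mul t, integral_const_mul (1-t)]
  have hintQ : ∫ o, φ o ∂Q = t * ∫ o, φ1 o ∂Q + (1 - t) * ∫ o, φ2 o ∂Q := by
    rw [hφ]
    rw [integral_add ((test_integrable Q hm1 h01 h11).const_mul t)
        ((test_integrable Q hm2 h02 h12).const_mul (1 - t)),
      integral_const_mul t, integral_const_mul (1-t)]
  have hmem : (1 - ∫ o, φ o ∂Q) ∈ tSet P Q (t * a + (1 - t) * b) := by
    refine ⟨φ, hmφ, h0φ, h1φ, ?_, rfl⟩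
    rw [hintP]
    have := mul_le_mul_of_nonneg_left hP1 ht0
    have := mul_le_mul_of_nonneg_left hP2 (by linarith : (0:ℝ) ≤ 1 - t)
    linarith
  have hle : tradeoff P Q (t * a + (1 - t) * b) ≤ 1 - ∫ o, φ o ∂Q := by
    rw [tradeoff_eq]
    exact csInf_le (tSet_bddBelow P Q _) hmem
  have e1 : t * (1 - ∫ o, φ1 o ∂Q) ≤ t * (tradeoff P Q a + δ) :=
    mul_le_mul_of_nonneg_left (le_of_lt hβ1) ht0
  have e2 : (1 - t) * (1 - ∫ o, φ2 o ∂Q) ≤ (1 - t) * (tradeoff P Q b + δ) :=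
    mul_le_mul_of_nonneg_left (le_of_lt hβ2) (by linarith)
  rw [hintQ] at hle
  nlinarith [hle, e1, e2]

end Aux

/-- The maximal advantage over tests equals the total variation distance
`TV(P, Q)`, and if the trade-off function is symmetric (`T(P,Q) = T(Q,P)` on `[0,1]`)
and `α*` is a fixed point of it (`T(P,Q)(α*) = α*`, `α* ∈ [0, 1/2]`), then the
advantage equals `1 - 2α*`. -/
theorem advantage_eq_tv_and_fixed_point
    {O : Type*} [MeasurableSpace O] (P Q : Measure O)
    [IsProbabilityMeasure P] [IsProbabilityMeasure Q] :
    advantage P Q = tvDist P Q ∧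
    ((∀ α ∈ Set.Icc (0 : ℝ) 1, tradeoff P Q α = tradeoff Q P α) →
      ∀ αs ∈ Set.Icc (0 : ℝ) (1 / 2), tradeoff P Q αs = αs →
        advantage P Q = 1 - 2 * αs) := by
  classical
  -- Hahn decomposition for Q - P : on s, P ≤ Q ; on sᶜ, Q ≤ P.
  obtain ⟨s, hs, hs1, hs2⟩ := hahn_decomposition (μ := Q) (ν := P)
  set D : ℝ := (Q s).toReal - (P s).toReal with hD
  -- the advantage set and its indicator member
  set A : Set ℝ := {x | ∃ φ : O → ℝ, Measurable φ ∧ (∀ o, 0 ≤ φ o) ∧ (∀ o, φ o ≤ 1) ∧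
    x = (∫ o, φ o ∂Q) - ∫ o, φ o ∂P} with hA
  -- upper bound: every test has advantage at most D
  have hub : ∀ x ∈ A, x ≤ D := by
    rintro x ⟨φ, hm, h0, h1, rfl⟩
    have hiP := test_integrable P hm h0 h1
    have hiQ := test_integrable Q hm h0 h1
    -- split integrals over s and sᶜ
    have hsplitP : ∫ o in s, φ o ∂P + ∫ o in sᶜ, φ o ∂P = ∫ o, φ o ∂P :=
      integral_add_compl hs hiP
    have hsplitQ : ∫ o in s, φ o ∂Q + ∫ o in sᶜ, φ o ∂Q = ∫ o, φ o ∂Q :=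
      integral_add_compl hs hiQ
    -- on sᶜ : Q.restrict ≤ P.restrict
    have hlec : Q.restrict sᶜ ≤ P.restrict sᶜ := by
      refine Measure.le_iff.mpr (fun t ht => ?_)
      rw [Measure.restrict_apply ht, Measure.restrict_apply ht]
      exact hs2 _ (ht.inter hs.compl) Set.inter_subset_right
    have hcompl : ∫ o in sᶜ, φ o ∂Q ≤ ∫ o in sᶜ, φ o ∂P :=
      integral_mono_measure hlec (Filter.Eventually.of_forall h0) hiP.restrict
    -- on s : P.restrict ≤ Q.restrict, applied to 1 - φ
    have hles : P.restrict s ≤ Q.restrict s := by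
      refine Measure.le_iff.mpr (fun t ht => ?_)
      rw [Measure.restrict_apply ht, Measure.restrict_apply ht]
      exact hs1 _ (ht.inter hs) Set.inter_subset_right
    have h1φi : Integrable (fun o => 1 - φ o) Q :=
      (integrable_const 1).sub hiQ
    have h1φiP : Integrable (fun o => 1 - φ o) P :=
      (integrable_const 1).sub hiP
    have hones : ∫ o in s, (1 - φ o) ∂P ≤ ∫ o in s, (1 - φ o) ∂Q :=
      integral_mono_measure hles
        (Filter.Eventually.of_forall (fun o => by have := h1 o; simp; linarith))
        h1φi.restrict
    have hsubP : ∫ o in s, (1 - φ o) ∂P = (P s).toReal - ∫ o in s, φ o ∂P := by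
      rw [integral_sub (integrable_const 1).restrict hiP.restrict]
      simp [Measure.restrict_apply_univ]
      rfl
    have hsubQ : ∫ o in s, (1 - φ o) ∂Q = (Q s).toReal - ∫ o in s, φ o ∂Q := by
      rw [integral_sub (integrable_const 1).restrict hiQ.restrict]
      simp [Measure.restrict_apply_univ]
      rfl
    rw [hsubP, hsubQ] at hones
    rw [hD]
    linarith
  -- D is attained by the indicator of s
  have hind : ∀ (μ : Measure O) (_ : IsProbabilityMeasure μ),
      ∫ o, s.indicator (fun _ => (1:ℝ)) o ∂μ = (μ s).toReal := by
    intro μ _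
    rw [integral_indicator hs]
    simp
    rfl
  have hindm : Measurable (s.indicator (fun _ => (1:ℝ))) :=
    measurable_const.indicator hs
  have hind0 : ∀ o, 0 ≤ s.indicator (fun _ => (1:ℝ)) o :=
    fun o => Set.indicator_nonneg (fun _ _ => zero_le_one) o
  have hind1 : ∀ o, s.indicator (fun _ => (1:ℝ)) o ≤ 1 := by
    intro o
    by_cases h : o ∈ s <;> simp [Set.indicator_apply, h]
  have hmemD : D ∈ A := by
    refine ⟨s.indicator (fun _ => (1:ℝ)), hindm, hind0, hind1, ?_⟩
    rw [hind Q inferInstance, hind P inferInstance]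
  have hadv : advantage P Q = D := by
    rw [advantage]
    exact IsGreatest.csSup_eq ⟨hmemD, hub⟩
  have hbddA : BddAbove A := ⟨D, hub⟩
  constructor
  · -- advantage = tvDist
    rw [hadv, tvDist]
    symm
    refine IsGreatest.csSup_eq ⟨⟨s, hs, rfl⟩, ?_⟩
    rintro x ⟨E, hE, rfl⟩
    refine hub _ ⟨E.indicator (fun _ => (1:ℝ)), measurable_const.indicator hE,
      fun o => Set.indicator_nonneg (fun _ _ => zero_le_one) o,
      fun o => by by_cases h : o ∈ E <;> simp [Set.indicator_apply, h], ?_⟩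
    rw [integral_indicator hE, integral_indicator hE]
    simp
    rfl
  · -- fixed point part
    intro hsym αs hαs hfix
    obtain ⟨hαs0, hαs2⟩ := hαs
    -- lower bound on tradeoff in terms of advantage:  tradeoff P Q α ≥ 1 - α - D
    have hlb : ∀ α : ℝ, 0 ≤ α → 1 - α - D ≤ tradeoff P Q α := by
      intro α hα
      rw [tradeoff_eq]
      refine le_csInf (tSet_nonempty P Q hα) ?_
      rintro β ⟨φ, hm, h0, h1, hP, rfl⟩
      have : (∫ o, φ o ∂Q) - ∫ o, φ o ∂P ≤ D := hub _ ⟨φ, hm, h0, h1, rfl⟩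
      linarith
    -- direction 1 : 1 - 2 αs ≤ D
    have hd1 : 1 - 2 * αs ≤ D := by
      have := hlb αs hαs0
      rw [hfix] at this
      linarith
    -- key claim : ∀ a ∈ [0,1], 2 αs ≤ a + tradeoff P Q a
    have hclaim : ∀ a : ℝ, 0 ≤ a → a ≤ 1 → 2 * αs ≤ a + tradeoff P Q a := by
      intro a ha0 ha1
      by_contra hcon
      push_neg at hcon
      set ε : ℝ := (2 * αs - (a + tradeoff P Q a)) / 2 with hε
      have hεpos : 0 < ε := by rw [hε]; linarith
      set b : ℝ := tradeoff P Q a + ε with hbdef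
      have hfa0 : 0 ≤ tradeoff P Q a := tradeoff_nonneg P Q ha0
      have hb0 : 0 ≤ b := by rw [hbdef]; linarith
      have hb1 : b ≤ 1 := by
        -- b = tradeoff P Q a + ε and a + tradeoff P Q a + 2ε = 2αs ≤ 1
        have : a + tradeoff P Q a + 2 * ε = 2 * αs := by rw [hε]; ring
        rw [hbdef]; linarith
      -- get a near-optimal test at a, giving tradeoff Q P b ≤ a
      have hwit : ∃ β ∈ tSet P Q a, β < b :=
        exists_lt_of_csInf_lt (tSet_nonempty P Q ha0)
          (by rw [← tradeoff_eq]; rw [hbdef]; linarith)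
      obtain ⟨β, ⟨φ, hm, h0, h1, hP, rfl⟩, hβlt⟩ := hwit
      have hiP := test_integrable P hm h0 h1
      have hiQ := test_integrable Q hm h0 h1
      have hQPb : tradeoff Q P b ≤ a := by
        rw [tradeoff_eq]
        have hmem : (1 - ∫ o, (1 - φ o) ∂P) ∈ tSet Q P b := by
          refine ⟨fun o => 1 - φ o, measurable_const.sub hm,
            fun o => by show (0:ℝ) ≤ 1 - φ o; have := h1 o; linarith,
            fun o => by show (1:ℝ) - φ o ≤ 1; have := h0 o; linarith, ?_, rfl⟩
          rw [integral_sub (integrable_const 1) hiQ]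
          simp only [integral_const, measure_univ, probReal_univ, ENNReal.toReal_one, smul_eq_mul, one_mul]
          linarith
        refine (csInf_le (tSet_bddBelow Q P b) hmem).trans ?_
        rw [integral_sub (integrable_const 1) hiP]
        simp only [integral_const, measure_univ, probReal_univ, ENNReal.toReal_one, smul_eq_mul, one_mul]
        linarith
      have hfb : tradeoff P Q b ≤ a := by
        rw [hsym b ⟨hb0, hb1⟩]; exact hQPb
      have hfa : tradeoff P Q a ≤ b := by rw [hbdef]; linarith
      -- now show 2 αs ≤ a + b, contradiction
      have hkey : 2 * αs ≤ a + b := by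
        rcases le_or_gt αs a with hc1 | hc1
        · rcases le_or_gt αs b with hc2 | hc2
          · linarith
          · -- b < αs ≤ a : convexity between b and a
            have hba : b < a := by linarith
            set t : ℝ := (a - αs) / (a - b) with htdef
            have ht0 : 0 ≤ t := by
              apply div_nonneg <;> linarith
            have ht1 : t ≤ 1 := by
              rw [htdef, div_le_one (by linarith)]; linarith
            have hcomb : t * b + (1 - t) * a = αs := by
              have hne : a - b ≠ 0 := sub_ne_zero.mpr (ne_of_gt hba)
              rw [htdef]; field_simp; ring
            have := tradeoff_convex P Q hb0 ha0 ht0 ht1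
            rw [hcomb, hfix] at this
            have e1 : t * tradeoff P Q b ≤ t * a := mul_le_mul_of_nonneg_left hfb ht0
            have e2 : (1 - t) * tradeoff P Q a ≤ (1 - t) * b :=
              mul_le_mul_of_nonneg_left hfa (by linarith)
            nlinarith [hcomb]
        · rcases le_or_gt αs b with hc2 | hc2
          · -- a < αs ≤ b : convexity between a and b
            have hab : a < b := by linarith
            set t : ℝ := (b - αs) / (b - a) with htdef
            have ht0 : 0 ≤ t := by
              apply div_nonneg <;> linarith
            have ht1 : t ≤ 1 := by
              rw [htdef, div_le_one (by linarith)]; linarith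
            have hcomb : t * a + (1 - t) * b = αs := by
              have hne : b - a ≠ 0 := sub_ne_zero.mpr (ne_of_gt hab)
              rw [htdef]; field_simp; ring
            have := tradeoff_convex P Q ha0 hb0 ht0 ht1
            rw [hcomb, hfix] at this
            have e1 : t * tradeoff P Q a ≤ t * b := mul_le_mul_of_nonneg_left hfa ht0
            have e2 : (1 - t) * tradeoff P Q b ≤ (1 - t) * a :=
              mul_le_mul_of_nonneg_left hfb (by linarith)
            nlinarith [hcomb]
          · -- a < αs and b < αs : monotonicity contradiction
            exfalso
            have : αs ≤ tradeoff P Q a := by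
              rw [← hfix]
              exact tradeoff_mono P Q ha0 (le_of_lt hc1)
            rw [hbdef] at hc2
            linarith
      -- but a + b = a + tradeoff P Q a + ε = 2αs - ε < 2αs
      have : a + b = 2 * αs - ε := by rw [hbdef, hε]; ring
      linarith
    -- direction 2 : D ≤ 1 - 2 αs  using a = (P s).toReal
    have hd2 : D ≤ 1 - 2 * αs := by
      set a : ℝ := (P s).toReal with ha
      have ha0 : 0 ≤ a := ENNReal.toReal_nonneg
      have ha1 : a ≤ 1 := by
        rw [ha]
        simpa using ENNReal.toReal_mono ENNReal.one_ne_top (prob_le_one (μ := P) (s := s))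
      have hfa : tradeoff P Q a ≤ 1 - (Q s).toReal := by
        rw [tradeoff_eq]
        refine csInf_le (tSet_bddBelow P Q a) ?_
        refine ⟨s.indicator (fun _ => (1:ℝ)), hindm, hind0, hind1, ?_, ?_⟩
        · rw [hind P inferInstance]
        · rw [hind Q inferInstance]
      have := hclaim a ha0 ha1
      rw [hD]
      linarith
    rw [hadv]
    linarith
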